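/- Let f_1,...,f_r : Q → ℝ and φ : Q → ℝ be functions on a compact metric space Q, and define the bundle H_x = {(λ_1,...,λ_r) ∈ ℝ^r : ∑_i λ_i f_i(x) = φ(x)}. If φ and the f_i are continuous, then the first Glaeser refinement is given by H¹_x = {(λ_1,...,λ_r) ∈ ℝ^r : λ ∈ H_x and |∑_i λ_i f_i(y) − φ(y)| = o(∑_i |f_i(y)|) as y → x}. -/

import Mathlib

open Filter Topology

/-- The Glaeser refinement of a bundle of fibers `H x ⊆ ℝ^r`. -/
def glaeserRef {Q : Type*} [MetricSpace Q] {r : ℕ}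
    (H : Q → Set (EuclideanSpace ℝ (Fin r))) : Q → Set (EuclideanSpace ℝ (Fin r)) :=
  fun x => {v ∈ H x | Tendsto (fun y => EMetric.infEdist v (H y)) (𝓝 x) (𝓝 0)}

lemma abs_apply_le_norm {r : ℕ} (v : EuclideanSpace ℝ (Fin r)) (i : Fin r) :
    |v i| ≤ ‖v‖ := by
  rw [EuclideanSpace.norm_eq]
  have h1 : |v i| = Real.sqrt (‖v i‖ ^ 2) := by
    rw [Real.sqrt_sq_eq_abs]; simp [abs_abs]
  rw [h1]
  apply Real.sqrt_le_sqrt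
  exact Finset.single_le_sum (f := fun j => ‖v j‖ ^ 2) (fun j _ => sq_nonneg _)
    (Finset.mem_univ i)

lemma abs_sub_apply_le_dist {r : ℕ} (v w : EuclideanSpace ℝ (Fin r)) (i : Fin r) :
    |v i - w i| ≤ dist v w := by
  have := abs_apply_le_norm (v - w) i
  simpa [dist_eq_norm] using this

/-- For the bundle `H x = {v : ∑ i v i * f i x = φ x}` attached to continuous
functions `f i, φ` on a compact metric space, the first Glaeser refinement is
`H¹ x = {v ∈ H x : |∑ i v i f i y − φ y| = o(∑ i |f i y|)` as `y → x}`. -/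
theorem statement11 (Q : Type*) [MetricSpace Q] [CompactSpace Q] (r : ℕ)
    (f : Fin r → Q → ℝ) (φ : Q → ℝ)
    (hf : ∀ i, Continuous (f i)) (hφ : Continuous φ)
    (H : Q → Set (EuclideanSpace ℝ (Fin r)))
    (hHdef : ∀ x, H x = {v | ∑ i, v i * f i x = φ x}) :
    ∀ x, glaeserRef H x =
      {v | v ∈ H x ∧ ∀ ε > (0 : ℝ), ∃ δ > (0 : ℝ), ∀ y : Q, dist y x < δ →
        |∑ i, v i * f i y - φ y| ≤ ε * ∑ i, |f i y|} := by
  intro x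
  ext v
  simp only [glaeserRef, Set.mem_setOf_eq, Set.mem_sep_iff]
  constructor
  · rintro ⟨hvx, hT⟩
    refine ⟨hvx, fun ε hε => ?_⟩
    have h2 : ∀ᶠ y in 𝓝 x, EMetric.infEdist v (H y) ≤ ENNReal.ofReal (ε / 2) :=
      (ENNReal.tendsto_nhds_zero.mp hT _ (by positivity))
    rw [Metric.eventually_nhds_iff] at h2
    obtain ⟨δ, hδ, h2⟩ := h2
    refine ⟨δ, hδ, fun y hy => ?_⟩
    have hlt : EMetric.infEdist v (H y) < ENNReal.ofReal ε := by
      refine lt_of_le_of_lt (h2 hy) ?_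
      exact ENNReal.ofReal_lt_ofReal_iff hε |>.mpr (by linarith)
    obtain ⟨w, hwH, hwe⟩ := EMetric.infEdist_lt_iff.mp hlt
    have hwd : dist v w < ε := by
      rwa [edist_dist, ENNReal.ofReal_lt_ofReal_iff hε] at hwe
    have hw : ∑ i, w i * f i y = φ y := by
      rw [hHdef] at hwH; exact hwH
    have key : |∑ i, v i * f i y - φ y| = |∑ i, (v i - w i) * f i y| := by
      rw [← hw, ← Finset.sum_sub_distrib]
      congr 1; apply Finset.sum_congr rfl; intro i _; ring
    rw [key]
    calc |∑ i, (v i - w i) * f i y| ≤ ∑ i, |(v i - w i) * f i y| :=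
          Finset.abs_sum_le_sum_abs _ _
      _ ≤ ∑ i, dist v w * |f i y| := by
          apply Finset.sum_le_sum; intro i _
          rw [abs_mul]
          exact mul_le_mul_of_nonneg_right (abs_sub_apply_le_dist v w i) (abs_nonneg _)
      _ = dist v w * ∑ i, |f i y| := by rw [Finset.mul_sum]
      _ ≤ ε * ∑ i, |f i y| := by
          apply mul_le_mul_of_nonneg_right hwd.le
          exact Finset.sum_nonneg fun i _ => abs_nonneg _
  · rintro ⟨hvx, hlo⟩
    refine ⟨hvx, ?_⟩
    rw [ENNReal.tendsto_nhds_zero]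
    intro ε hε
    rcases eq_or_ne ε ⊤ with rfl | hεtop
    · exact Filter.Eventually.of_forall fun y => le_top
    set c : ℝ := ε.toReal with hc
    have hcpos : 0 < c := ENNReal.toReal_pos hε.ne' hεtop
    have hc' : 0 < c / (r + 1) := by positivity
    obtain ⟨δ, hδ, hδp⟩ := hlo (c / (r + 1)) hc'
    rw [Metric.eventually_nhds_iff]
    refine ⟨δ, hδ, fun y hy => ?_⟩
    set fy : EuclideanSpace ℝ (Fin r) := WithLp.toLp 2 (fun i => f i y) with hfy
    have hbound := hδp y hy
    by_cases h0 : fy = 0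
    · -- all f i y = 0, hence φ y = 0 and v ∈ H y
      have hfz : ∀ i, f i y = 0 := fun i => by simpa [fy] using congrArg (fun z : EuclideanSpace ℝ (Fin r) => z i) h0
      have hsum0 : ∑ i, |f i y| = 0 := by simp [hfz]
      have hS : |∑ i, v i * f i y - φ y| ≤ 0 := by
        rw [hsum0, mul_zero] at hbound; exact hbound
      have hφ0 : φ y = 0 := by
        have : ∑ i, v i * f i y = 0 := by simp [hfz]
        rw [this] at hS
        have := abs_nonneg (0 - φ y)
        have h := le_antisymm hS this
        simpa [abs_eq_zero] using h
      have hvy : v ∈ H y := by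
        rw [hHdef]
        simp only [Set.mem_setOf_eq, hφ0]
        simp [hfz]
      exact (EMetric.infEdist_zero_of_mem hvy).trans_le zero_le
    · have hnorm : 0 < ‖fy‖ := norm_pos_iff.mpr h0
      set S : ℝ := ∑ i, v i * f i y - φ y with hS
      set w : EuclideanSpace ℝ (Fin r) := v - (S / ‖fy‖ ^ 2) • fy with hwdef
      have hwi : ∀ i, w i = v i - (S / ‖fy‖ ^ 2) * f i y := by
        intro i; simp [hwdef, hfy]
      have hnormsq : ∑ i, f i y * f i y = ‖fy‖ ^ 2 := by
        rw [EuclideanSpace.norm_eq, Real.sq_sqrt (Finset.sum_nonneg fun i _ => sq_nonneg _)]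
        apply Finset.sum_congr rfl; intro i _
        simp [hfy, sq_abs]; ring
      have hwH : w ∈ H y := by
        rw [hHdef]
        simp only [Set.mem_setOf_eq]
        have : ∑ i, w i * f i y
            = ∑ i, v i * f i y - (S / ‖fy‖ ^ 2) * ∑ i, f i y * f i y := by
          rw [Finset.mul_sum, ← Finset.sum_sub_distrib]
          apply Finset.sum_congr rfl; intro i _
          rw [hwi i]; ring
        rw [this, hnormsq, div_mul_cancel₀ _ (by positivity), hS]; ring
      have hdvw : dist v w = |S| / ‖fy‖ := by
        rw [dist_eq_norm, hwdef]
        simp only [sub_sub_cancel]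
        rw [norm_smul, Real.norm_eq_abs, abs_div, abs_pow, abs_norm]
        field_simp
      have hfile : ∀ i, |f i y| ≤ ‖fy‖ := by
        intro i
        have := abs_apply_le_norm fy i
        simpa [hfy] using this
      have hsumle : ∑ i, |f i y| ≤ r * ‖fy‖ := by
        calc ∑ i, |f i y| ≤ ∑ _i : Fin r, ‖fy‖ :=
              Finset.sum_le_sum fun i _ => hfile i
          _ = r * ‖fy‖ := by simp [Finset.sum_const, Finset.card_univ]
      have hdle : dist v w ≤ c := by
        rw [hdvw]
        rw [div_le_iff₀ hnorm]
        calc |S| ≤ (c / (r + 1)) * ∑ i, |f i y| := hbound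
          _ ≤ (c / (r + 1)) * (r * ‖fy‖) :=
              mul_le_mul_of_nonneg_left hsumle hc'.le
          _ ≤ c * ‖fy‖ := by
              rw [← mul_assoc]
              apply mul_le_mul_of_nonneg_right _ hnorm.le
              rw [div_mul_eq_mul_div, div_le_iff₀ (by positivity)]
              nlinarith [hcpos]
      calc EMetric.infEdist v (H y) ≤ edist v w := EMetric.infEdist_le_edist_of_mem hwH
        _ = ENNReal.ofReal (dist v w) := edist_dist v w
        _ ≤ ENNReal.ofReal c := ENNReal.ofReal_le_ofReal hdle
        _ = ε := ENNReal.ofReal_toReal hεtop
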